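/- Let a and b be countable past-finite partial orders having the same stems. If every level of a contains only finitely many non-maximal elements, then a and b are order-isomorphic. (Lemma: Θ ⊆ Γ.) -/

import Mathlib

/-- A poset (given by its order relation `le`) is *past-finite* if the past
`{y | y ≤ x}` of every element `x` is finite. -/
def PastFinite {α : Type} (le : α → α → Prop) : Prop := ∀ x : α, {y : α | le y x}.Finite

/-- The finite poset `s` on `Fin n` *is a stem in* the poset `(α, le)`: there is an
order-embedding of `s` into `(α, le)` whose image is a down-closed (lower) set. -/
def IsStemIn {α : Type} {n : ℕ} (s : Fin n → Fin n → Prop) (le : α → α → Prop) : Prop :=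
  ∃ f : Fin n → α, Function.Injective f ∧ (∀ i j, s i j ↔ le (f i) (f j)) ∧
    ∀ (x : α) (j : Fin n), le x (f j) → ∃ i, f i = x

/-- Two posets *have the same stems* if every finite poset is a stem in one iff it is a
stem in the other (every finite poset is isomorphic to one on some `Fin n`). -/
def SameStems {α β : Type} (le₁ : α → α → Prop) (le₂ : β → β → Prop) : Prop :=
  ∀ (n : ℕ) (s : Fin n → Fin n → Prop), IsStemIn s le₁ ↔ IsStemIn s le₂

/-- The posets `(α, le₁)` and `(β, le₂)` are order-isomorphic. -/
def OrderIsoRel {α β : Type} (le₁ : α → α → Prop) (le₂ : β → β → Prop) : Prop :=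
  ∃ e : α ≃ β, ∀ x y : α, le₁ x y ↔ le₂ (e x) (e y)

/-- Strict order relation associated to `le` (in a partial order). -/
def LtRel {α : Type} (le : α → α → Prop) (x y : α) : Prop := le x y ∧ x ≠ y

/-- `x` is maximal: no element lies strictly above it. -/
def IsMaximalRel {α : Type} (le : α → α → Prop) (x : α) : Prop := ∀ y, le x y → y = x

/-- There is a chain `x₀ < x₁ < ⋯ < x_k = x` (of length `k`) with top element `x`. -/
def ChainTo {α : Type} (le : α → α → Prop) (x : α) (k : ℕ) : Prop :=
  ∃ f : Fin (k + 1) → α, (∀ i j : Fin (k + 1), i < j → LtRel le (f i) (f j)) ∧ f (Fin.last k) = x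

/-- `x` has level `k`: `k` is the maximum length of a chain with top element `x`. -/
def HasLevel {α : Type} (le : α → α → Prop) (x : α) (k : ℕ) : Prop :=
  ChainTo le x k ∧ ∀ m, ChainTo le x m → m ≤ k

/-- A causet (countable past-finite partial order) is *rogue* if there exists a causet
not order-isomorphic to it having the same stems. -/
def IsRogueRel {α : Type} (le : α → α → Prop) : Prop :=
  ∃ (β : Type) (le' : β → β → Prop), IsPartialOrder β le' ∧ Countable β ∧ PastFinite le' ∧
    ¬ OrderIsoRel le le' ∧ SameStems le le'

set_option linter.unusedSectionVars false
set_option linter.unusedVariables false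

section Generic
variable {γ : Type} (le : γ → γ → Prop)

/-- nonmaximal -/
def NonMaxR (x : γ) : Prop := ∃ y, le x y ∧ y ≠ x
/-- lower (down-closed) set -/
def LowerR (S : Set γ) : Prop := ∀ ⦃x y : γ⦄, le x y → y ∈ S → x ∈ S
def pastR (x : γ) : Set γ := {y | le y x}
def spastR (x : γ) : Set γ := {y | le y x ∧ y ≠ x}
/-- maximal elements with given strict past -/
def MaxFib (P : Set γ) : Set γ := {x | IsMaximalRel le x ∧ spastR le x = P}
/-- there are at least `j` maximal elements with strict past `P` -/
def MGE (P : Set γ) (j : ℕ) : Prop := ∃ W : Finset γ, ↑W ⊆ MaxFib le P ∧ W.card = j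
def LvlLe (x : γ) (k : ℕ) : Prop := ∀ m, ChainTo le x m → m ≤ k
/-- nonmaximal elements of level at most `k` -/
def LkS (k : ℕ) : Set γ := {x | NonMaxR le x ∧ LvlLe le x k}
/-- chain inside `S` with top `x` -/
def ChainIn (S : Set γ) (x : γ) (k : ℕ) : Prop :=
  ∃ f : Fin (k + 1) → γ, (∀ i, f i ∈ S) ∧ (∀ i j : Fin (k + 1), i < j → LtRel le (f i) (f j)) ∧
    f (Fin.last k) = x
def LvlLeIn (S : Set γ) (x : γ) (k : ℕ) : Prop := ∀ m, ChainIn le S x m → m ≤ k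
/-- maximal within `S` -/
def MaxIn (S : Set γ) (x : γ) : Prop := x ∈ S ∧ ∀ y ∈ S, le x y → y = x
/-- strict past within `S` -/
def spastIn (S : Set γ) (x : γ) : Set γ := {y ∈ S | LtRel le y x}
/-- intrinsic core: nonmaximal-in-S elements of S of level (within S) at most `k` -/
def coreS (S : Set γ) (k : ℕ) : Set γ :=
  {x ∈ S | (∃ y ∈ S, LtRel le x y) ∧ LvlLeIn le S x k}

variable {le}

lemma chainTo_zero (x : γ) : ChainTo le x 0 :=
  ⟨fun _ => x, fun i j hij => absurd hij (by omega), rfl⟩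

variable (hpo : IsPartialOrder γ le)
include hpo


lemma chain_le_top {x : γ} {k : ℕ} {f : Fin (k+1) → γ}
    (hf : ∀ i j : Fin (k+1), i < j → LtRel le (f i) (f j)) (htop : f (Fin.last k) = x)
    (i : Fin (k+1)) : le (f i) x := by
  rcases eq_or_ne i (Fin.last k) with h | h
  · rw [h, htop]; exact hpo.refl x
  · have : i < Fin.last k := lt_of_le_of_ne (Fin.le_last i) h
    rw [← htop]; exact (hf _ _ this).1

lemma chainTo_snoc {x y : γ} {m : ℕ} (hxy : LtRel le y x) (h : ChainTo le y m) :
    ChainTo le x (m + 1) := by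
  obtain ⟨f, hf, htop⟩ := h
  refine ⟨fun i => if h : (i : ℕ) < m + 1 then f ⟨i, h⟩ else x, fun i j hij => ?_, ?_⟩
  · have hij' : (i : ℕ) < (j : ℕ) := hij
    by_cases hj : (j : ℕ) < m + 1
    · have hi : (i : ℕ) < m + 1 := lt_trans hij' hj
      simp only [dif_pos hi, dif_pos hj]
      exact hf ⟨i, hi⟩ ⟨j, hj⟩ hij'
    · have hi : (i : ℕ) < m + 1 := by omega
      simp only [dif_pos hi, dif_neg hj]
      have h1 : le (f ⟨i, hi⟩) y := chain_le_top hpo hf htop ⟨i, hi⟩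
      refine ⟨hpo.trans _ _ _ h1 hxy.1, fun he => ?_⟩
      exact hxy.2 (hpo.antisymm _ _ hxy.1 (he ▸ h1))
  · exact dif_neg (by simp)

lemma chainTo_unsnoc {x : γ} {m : ℕ} (h : ChainTo le x (m + 1)) :
    ∃ y, LtRel le y x ∧ ChainTo le y m := by
  obtain ⟨f, hf, htop⟩ := h
  refine ⟨f ⟨m, by omega⟩, ?_, fun i : Fin (m+1) => f ⟨i, by omega⟩,
    fun i j hij => hf _ _ hij, rfl⟩
  rw [← htop]
  exact hf _ _ (by simp [Fin.lt_def])

omit hpo in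
lemma chainTo_restrict {x : γ} {k : ℕ} {f : Fin (k+1) → γ}
    (hf : ∀ i j : Fin (k+1), i < j → LtRel le (f i) (f j)) (i : Fin (k+1)) :
    ChainTo le (f i) i := by
  refine ⟨fun j : Fin ((i : ℕ) + 1) => f ⟨j, by omega⟩, fun p q hpq => hf _ _ hpq, ?_⟩
  exact congrArg f (Fin.ext (by simp))

variable (hpf : PastFinite le)
include hpf

lemma chain_inj {k : ℕ} {f : Fin (k+1) → γ}
    (hf : ∀ i j : Fin (k+1), i < j → LtRel le (f i) (f j)) : Function.Injective f := by
  intro i j hij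
  rcases lt_trichotomy i j with h | h | h
  · exact absurd hij (hf _ _ h).2
  · exact h
  · exact absurd hij.symm (hf _ _ h).2

lemma chainTo_bound {x : γ} {m : ℕ} (h : ChainTo le x m) :
    m < Nat.card (pastR le x) := by
  obtain ⟨f, hf, htop⟩ := h
  have : ∀ i, f i ∈ pastR le x := fun i => chain_le_top hpo hf htop i
  have hinj : Function.Injective (fun i : Fin (m+1) => (⟨f i, this i⟩ : pastR le x)) := by
    intro i j hij
    exact chain_inj hpo hpf hf (congrArg Subtype.val hij)
  have hfin : Finite (pastR le x) := (hpf x).to_subtype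
  have := Nat.card_le_card_of_injective _ hinj
  simpa using this

lemma exists_hasLevel (x : γ) : ∃ k, HasLevel le x k := by
  classical
  have hbd : ∀ m, ChainTo le x m → m ≤ Nat.card (pastR le x) :=
    fun m hm => le_of_lt (chainTo_bound hpo hpf hm)
  refine ⟨Nat.findGreatest (fun m => ChainTo le x m) (Nat.card (pastR le x)),
    Nat.findGreatest_spec (hbd 0 (chainTo_zero x)) (chainTo_zero x), fun m hm => ?_⟩
  exact Nat.le_findGreatest (hbd m hm) hm


end Generic

section Generic2
variable {γ : Type} {le : γ → γ → Prop} (hpo : IsPartialOrder γ le) (hpf : PastFinite le)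
include hpo hpf

lemma nonMaxR_iff {x : γ} : NonMaxR le x ↔ ¬ IsMaximalRel le x := by
  constructor
  · rintro ⟨y, hy, hne⟩ hmax; exact hne (hmax y hy)
  · intro h
    by_contra hn
    exact h (fun y hy => by_contra fun hne => hn ⟨y, hy, hne⟩)

lemma nonMax_of_le {x y : γ} (h : le y x) (hx : NonMaxR le x) : NonMaxR le y := by
  rcases eq_or_ne y x with rfl | hne
  · exact hx
  · exact ⟨x, h, fun hxy => hne hxy.symm⟩


lemma lvlLe_of_le {x y : γ} {k : ℕ} (h : le y x) (hx : LvlLe le x k) : LvlLe le y k := by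
  rcases eq_or_ne y x with rfl | hne
  · exact hx
  · intro m hm
    have := hx (m+1) (chainTo_snoc hpo ⟨h, hne⟩ hm)
    omega

lemma lower_LkS (k : ℕ) : LowerR le (LkS le k) :=
  fun x y hxy hy => ⟨nonMax_of_le hpo hpf hxy hy.1, lvlLe_of_le hpo hpf hxy hy.2⟩

lemma LkS_mono {k m : ℕ} (h : k ≤ m) : LkS le k ⊆ LkS le m :=
  fun x hx => ⟨hx.1, fun j hj => le_trans (hx.2 j hj) h⟩

lemma past_subset_LkS {x : γ} {k : ℕ} (hx : x ∈ LkS le k) : pastR le x ⊆ LkS le k :=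
  fun y hy => lower_LkS hpo hpf k hy hx


lemma LkS_finite (hfin : ∀ j : ℕ, {x : γ | HasLevel le x j ∧ ¬ IsMaximalRel le x}.Finite)
    (k : ℕ) : (LkS le k).Finite := by
  refine Set.Finite.subset (Set.Finite.biUnion (Finset.range (k+1)).finite_toSet
    (fun j _ => hfin j)) ?_
  intro x hx
  obtain ⟨j, hj⟩ := exists_hasLevel hpo hpf x
  have hjk : j ≤ k := hx.2 j hj.1
  simp only [Set.mem_iUnion, Finset.coe_range, Set.mem_setOf_eq]
  exact ⟨j, by simpa using Nat.lt_succ_of_le hjk, hj, (nonMaxR_iff hpo hpf).mp hx.1⟩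

lemma chainIn_to_chainTo {S : Set γ} {x : γ} {m : ℕ} (h : ChainIn le S x m) :
    ChainTo le x m := by
  obtain ⟨f, _, hf, htop⟩ := h
  exact ⟨f, hf, htop⟩

lemma chainTo_to_chainIn {S : Set γ} (hS : LowerR le S) {x : γ} (hx : x ∈ S) {m : ℕ}
    (h : ChainTo le x m) : ChainIn le S x m := by
  obtain ⟨f, hf, htop⟩ := h
  exact ⟨f, fun i => hS (chain_le_top hpo hf htop i) hx, hf, htop⟩

lemma lvlLeIn_iff {S : Set γ} (hS : LowerR le S) {x : γ} (hx : x ∈ S) {k : ℕ} :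
    LvlLeIn le S x k ↔ LvlLe le x k :=
  ⟨fun h m hm => h m (chainTo_to_chainIn hpo hpf hS hx hm),
   fun h m hm => h m (chainIn_to_chainTo hpo hpf hm)⟩

lemma coreS_subset_LkS {S : Set γ} (hS : LowerR le S) {k : ℕ} :
    coreS le S k ⊆ LkS le k := by
  rintro x ⟨hxS, ⟨y, hyS, hlt⟩, hlvl⟩
  exact ⟨⟨y, hlt.1, fun h => hlt.2 h.symm⟩, (lvlLeIn_iff hpo hpf hS hxS).mp hlvl⟩

lemma mem_coreS {S : Set γ} (hS : LowerR le S) {k : ℕ} {x : γ} (hx : x ∈ LkS le k)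
    (hxS : x ∈ S) (hy : ∃ y ∈ S, LtRel le x y) : x ∈ coreS le S k :=
  ⟨hxS, hy, (lvlLeIn_iff hpo hpf hS hxS).mpr hx.2⟩

lemma spastIn_eq {S : Set γ} (hS : LowerR le S) {x : γ} (hx : x ∈ S) :
    spastIn le S x = spastR le x := by
  ext y
  exact ⟨fun h => ⟨h.2.1, h.2.2⟩, fun h => ⟨hS h.1 hx, h.1, h.2⟩⟩

lemma maxIn_of_max {S : Set γ} {x : γ} (hmax : IsMaximalRel le x) (hx : x ∈ S) :
    MaxIn le S x := ⟨hx, fun y _ hy => hmax y hy⟩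

lemma spastR_lower : ∀ x : γ, LowerR le (pastR le x) := by
  intro x y z hyz hz
  exact hpo.trans _ _ _ hyz hz

end Generic2

section Transfer
variable {γ δ : Type} {le : γ → γ → Prop} {le' : δ → δ → Prop}

/-- `g` restricts to an order isomorphism from `T` onto `F`. -/
def IsoOn (le : γ → γ → Prop) (le' : δ → δ → Prop) (T : Set γ) (F : Set δ) (g : γ → δ) : Prop :=
  Set.MapsTo g T F ∧ Set.SurjOn g T F ∧ ∀ x ∈ T, ∀ y ∈ T, (le x y ↔ le' (g x) (g y))

/-- a two-sided order isomorphism pair between `T` and `F`. -/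
def IsoPair (le : γ → γ → Prop) (le' : δ → δ → Prop) (T : Set γ) (F : Set δ)
    (g : γ → δ) (g' : δ → γ) : Prop :=
  IsoOn le le' T F g ∧ IsoOn le' le F T g' ∧ (∀ x ∈ T, g' (g x) = x) ∧ (∀ y ∈ F, g (g' y) = y)

variable (hpo : IsPartialOrder γ le) (hpo' : IsPartialOrder δ le')
include hpo hpo'

lemma IsoOn.injOn {T F g} (h : IsoOn le le' T F g) : Set.InjOn g T := by
  intro x hx y hy hxy
  have h1 : le x y := (h.2.2 x hx y hy).mpr (hxy ▸ hpo'.refl (g x))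
  have h2 : le y x := (h.2.2 y hy x hx).mpr (hxy ▸ hpo'.refl (g x))
  exact hpo.antisymm _ _ h1 h2

lemma IsoOn.ltRel {T F g} (h : IsoOn le le' T F g) {x y : γ} (hx : x ∈ T) (hy : y ∈ T) :
    LtRel le x y ↔ LtRel le' (g x) (g y) := by
  constructor
  · rintro ⟨h1, h2⟩
    exact ⟨(h.2.2 x hx y hy).mp h1, fun he => h2 (h.injOn hpo hpo' hx hy he)⟩
  · rintro ⟨h1, h2⟩
    exact ⟨(h.2.2 x hx y hy).mpr h1, fun he => h2 (congrArg g he)⟩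

lemma IsoOn.toPair [Nonempty γ] {T F g} (h : IsoOn le le' T F g) :
    ∃ g', IsoPair le le' T F g g' := by
  classical
  refine ⟨Function.invFunOn g T, h, ⟨?_, ?_, ?_⟩, ?_, ?_⟩
  · intro y hy
    exact Function.invFunOn_mem (h.2.1 hy)
  · intro x hx
    refine ⟨g x, h.1 hx, ?_⟩
    exact (h.injOn hpo hpo').leftInvOn_invFunOn hx
  · intro y hy y' hy'
    have e1 : g (Function.invFunOn g T y) = y := Function.invFunOn_eq (by exact h.2.1 hy)
    have e2 : g (Function.invFunOn g T y') = y' := Function.invFunOn_eq (by exact h.2.1 hy')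
    have m1 : Function.invFunOn g T y ∈ T := Function.invFunOn_mem (h.2.1 hy)
    have m2 : Function.invFunOn g T y' ∈ T := Function.invFunOn_mem (h.2.1 hy')
    conv_lhs => rw [← e1, ← e2]
    exact (h.2.2 _ m1 _ m2).symm
  · intro x hx
    exact (h.injOn hpo hpo').leftInvOn_invFunOn hx
  · intro y hy
    exact Function.invFunOn_eq (by exact h.2.1 hy)

lemma IsoOn.chainIn {T F g} (h : IsoOn le le' T F g) {x : γ} {m : ℕ}
    (hch : ChainIn le T x m) : ChainIn le' F (g x) m := by
  obtain ⟨f, hmem, hf, htop⟩ := hch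
  refine ⟨g ∘ f, fun i => h.1 (hmem i), fun i j hij => ?_, by simp [htop]⟩
  rcases hf i j hij with ⟨h1, h2⟩
  refine ⟨(h.2.2 _ (hmem i) _ (hmem j)).mp h1, fun he => ?_⟩
  exact (hf i j hij).2 (h.injOn hpo hpo' (hmem i) (hmem j) he)

lemma IsoPair.lvlLeIn {T F g g'} (h : IsoPair le le' T F g g') {x : γ} (hx : x ∈ T) {k : ℕ} :
    LvlLeIn le T x k ↔ LvlLeIn le' F (g x) k := by
  constructor
  · intro hl m hm
    have := h.2.1.chainIn hpo' hpo hm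
    rw [h.2.2.1 x hx] at this
    exact hl m this
  · intro hl m hm
    exact hl m (h.1.chainIn hpo hpo' hm)

lemma IsoPair.coreS_image {T F g g'} (h : IsoPair le le' T F g g') (k : ℕ) :
    g '' coreS le T k = coreS le' F k := by
  ext z
  constructor
  · rintro ⟨x, ⟨hxT, ⟨y, hyT, hlt⟩, hlvl⟩, rfl⟩
    refine ⟨h.1.1 hxT, ⟨g y, h.1.1 hyT, (h.1.ltRel hpo hpo' hxT hyT).mp hlt⟩, ?_⟩
    exact (h.lvlLeIn hpo hpo' hxT).mp hlvl
  · rintro ⟨hzF, ⟨w, hwF, hlt⟩, hlvl⟩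
    have hzT : g' z ∈ T := h.2.1.1 hzF
    have hgz : g (g' z) = z := h.2.2.2 z hzF
    refine ⟨g' z, ⟨hzT, ⟨g' w, h.2.1.1 hwF, ?_⟩, ?_⟩, hgz⟩
    · have := (h.2.1.ltRel hpo' hpo hzF hwF).mp hlt
      exact this
    · rw [(h.lvlLeIn hpo hpo' hzT : _)]
      rw [hgz]
      exact hlvl

omit hpo hpo' in
lemma IsoOn.maxIn {T F g} (h : IsoOn le le' T F g) {x : γ} (hmax : MaxIn le T x) :
    MaxIn le' F (g x) := by
  refine ⟨h.1 hmax.1, fun y' hy' hle => ?_⟩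
  obtain ⟨y, hyT, rfl⟩ := h.2.1 hy'
  exact congrArg g (hmax.2 y hyT ((h.2.2 x hmax.1 y hyT).mpr hle))

lemma IsoOn.spastIn_image {T F g} (h : IsoOn le le' T F g) {x : γ} (hx : x ∈ T) :
    g '' spastIn le T x = spastIn le' F (g x) := by
  ext z
  constructor
  · rintro ⟨y, ⟨hyT, hlt⟩, rfl⟩
    exact ⟨h.1 hyT, (h.ltRel hpo hpo' hyT hx).mp hlt⟩
  · rintro ⟨hzF, hlt⟩
    obtain ⟨y, hyT, rfl⟩ := h.2.1 hzF
    exact ⟨y, ⟨hyT, (h.ltRel hpo hpo' hyT hx).mpr hlt⟩, rfl⟩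

end Transfer

section StemTransfer
variable {α β : Type} {leA : α → α → Prop} {leB : β → β → Prop}

lemma sameStems_symm (h : SameStems leA leB) : SameStems leB leA :=
  fun n s => (h n s).symm

lemma stem_gives_isStemIn {T : Set α} (hT : T.Finite) (hlow : LowerR leA T) :
    ∃ (n : ℕ) (e : T ≃ Fin n), IsStemIn (fun i j => leA ((e.symm i) : α) ((e.symm j) : α)) leA := by
  classical
  have : Fintype T := hT.fintype
  refine ⟨Fintype.card T, Fintype.equivFin T, Subtype.val ∘ (Fintype.equivFin T).symm,
    ?_, fun i j => Iff.rfl, ?_⟩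
  · exact Subtype.val_injective.comp (Equiv.injective _)
  · intro x j hx
    have hxT : x ∈ T := hlow hx (Subtype.coe_prop _)
    exact ⟨Fintype.equivFin T ⟨x, hxT⟩, by simp⟩

lemma stem_transfer [Nonempty β] (hstems : SameStems leA leB)
    {T : Set α} (hT : T.Finite) (hlow : LowerR leA T) :
    ∃ (F : Set β) (g : α → β), F.Finite ∧ LowerR leB F ∧ IsoOn leA leB T F g := by
  classical
  obtain ⟨n, e, hstem⟩ := stem_gives_isStemIn hT hlow
  obtain ⟨u, huinj, huiff, hulow⟩ := (hstems n _).mp hstem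
  refine ⟨Set.range u, fun x => if h : x ∈ T then u (e ⟨x, h⟩) else Classical.arbitrary β,
    Set.finite_range u, ?_, ?_, ?_, ?_⟩
  · intro y z hyz hz
    obtain ⟨j, rfl⟩ := hz
    obtain ⟨i, rfl⟩ := hulow y j hyz
    exact ⟨i, rfl⟩
  · intro x hx
    simp only [dif_pos hx]
    exact ⟨e ⟨x, hx⟩, rfl⟩
  · rintro y ⟨i, rfl⟩
    refine ⟨(e.symm i : α), Subtype.coe_prop _, ?_⟩
    simp only [dif_pos (Subtype.coe_prop (e.symm i))]
    congr 1
    simp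
  · intro x hx y hy
    simp only [dif_pos hx, dif_pos hy]
    rw [← huiff]
    simp

end StemTransfer

/-- `f` is an order isomorphism level-`k` parts and matches maximal-element multiplicities
over lower subsets of the level-`k` part. -/
def GoodIso {α β : Type} (leA : α → α → Prop) (leB : β → β → Prop) (k : ℕ) (f : α → β) : Prop :=
  IsoOn leA leB (LkS leA k) (LkS leB k) f ∧
    ∀ P, LowerR leA P → P ⊆ LkS leA k → ∀ j, (MGE leA P j ↔ MGE leB (f '' P) j)

/-- half of the goodness condition -/
def HalfGood {α β : Type} (leA : α → α → Prop) (leB : β → β → Prop) (k : ℕ) (f : α → β) : Prop :=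
  IsoOn leA leB (LkS leA k) (LkS leB k) f ∧
    ∀ P, LowerR leA P → P ⊆ LkS leA k → ∀ j, MGE leA P j → MGE leB (f '' P) j

section Generic3
variable {γ : Type} {le : γ → γ → Prop} (hpo : IsPartialOrder γ le) (hpf : PastFinite le)
include hpo hpf

lemma pastR_lower (x : γ) : LowerR le (pastR le x) :=
  fun y z hyz hz => hpo.trans _ _ _ hyz hz

lemma exists_cover_stem {X : Set γ} (hX : X.Finite) (hnm : ∀ x ∈ X, NonMaxR le x) :
    ∃ T : Set γ, T.Finite ∧ LowerR le T ∧ X ⊆ T ∧ ∀ x ∈ X, ∃ y ∈ T, LtRel le x y := by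
  classical
  choose cov hcov hne using fun (x : X) => hnm x.1 x.2
  refine ⟨⋃ x : X, pastR le (cov x), ?_, ?_, ?_, ?_⟩
  · have : Finite X := hX.to_subtype
    exact Set.finite_iUnion (fun x => hpf (cov x))
  · intro y z hyz hz
    obtain ⟨S, ⟨x, rfl⟩, hzS⟩ := hz
    exact Set.mem_iUnion.mpr ⟨x, hpo.trans _ _ _ hyz hzS⟩
  · intro x hx
    exact Set.mem_iUnion.mpr ⟨⟨x, hx⟩, hcov ⟨x, hx⟩⟩
  · intro x hx
    refine ⟨cov ⟨x, hx⟩, Set.mem_iUnion.mpr ⟨⟨x, hx⟩, hpo.refl _⟩,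
      hcov ⟨x, hx⟩, fun h => hne ⟨x, hx⟩ h.symm⟩

omit hpo hpf in
lemma coreS_eq_LkS_of_ncard {F : Set γ} (hlow : LowerR le F)
    (hpo : IsPartialOrder γ le) (hpf : PastFinite le) {k : ℕ} (hfin : (LkS le k).Finite)
    (hcard : (LkS le k).ncard ≤ (coreS le F k).ncard) : coreS le F k = LkS le k :=
  Set.eq_of_subset_of_ncard_le (coreS_subset_LkS hpo hpf hlow) hcard hfin

lemma maximal_of_maxIn {F : Set γ} (hlow : LowerR le F) {k : ℕ}
    (hfull : coreS le F (k+1) = LkS le (k+1)) {x : γ} (hx : MaxIn le F x)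
    (hsp : spastR le x ⊆ LkS le k) : IsMaximalRel le x := by
  by_contra hmax
  have hnm : NonMaxR le x := (nonMaxR_iff hpo hpf).mpr hmax
  have hlvl : LvlLe le x (k+1) := by
    intro m hm
    cases m with
    | zero => omega
    | succ m =>
      obtain ⟨y, hylt, hy⟩ := chainTo_unsnoc hpo hm
      have hyX : y ∈ LkS le k := hsp ⟨hylt.1, hylt.2⟩
      have := hyX.2 m hy
      omega
  have hmem : x ∈ coreS le F (k+1) := hfull ▸ (⟨hnm, hlvl⟩ : x ∈ LkS le (k+1))
  obtain ⟨-, ⟨z, hzF, hzlt⟩, -⟩ := hmem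
  exact hzlt.2 (hx.2 z hzF hzlt.1).symm

omit hpo hpf in
lemma MGE_zero (P : Set γ) : MGE le P 0 := ⟨∅, by simp, rfl⟩

omit hpo hpf in
lemma MGE_mono {P : Set γ} {j j' : ℕ} (h : j' ≤ j) (hj : MGE le P j) : MGE le P j' := by
  obtain ⟨W, hW, rfl⟩ := hj
  obtain ⟨W', hW', hc⟩ := Finset.exists_subset_card_eq h
  exact ⟨W', fun x hx => hW (hW' hx), hc⟩

omit hpo hpf in
lemma exists_maxfib_witness (n : ℕ) (P : Set γ) :
    ∃ W : Finset γ, ↑W ⊆ MaxFib le P ∧ ∀ j ≤ n, MGE le P j → j ≤ W.card := by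
  classical
  by_cases h : MGE le P n
  · obtain ⟨W, hW, hc⟩ := h
    exact ⟨W, hW, fun j hj _ => hc ▸ hj⟩
  · set j₀ := Nat.findGreatest (fun j => MGE le P j) n with hj₀
    have hP0 : MGE le P j₀ := Nat.findGreatest_spec (Nat.zero_le n) (MGE_zero P)
    obtain ⟨W, hW, hc⟩ := hP0
    exact ⟨W, hW, fun j hj hmge => hc ▸ Nat.le_findGreatest hj hmge⟩

omit hpo hpf in
lemma spastR_lower' (hpo : IsPartialOrder γ le) (x : γ) : LowerR le (spastR le x) := by
  intro y z hyz hz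
  refine ⟨hpo.trans _ _ _ hyz hz.1, fun hyx => ?_⟩
  exact hz.2 (hpo.antisymm _ _ hz.1 (hyx ▸ hyz))

omit hpo hpf in
lemma spastR_subset_nonmax (x : γ) : spastR le x ⊆ {z | NonMaxR le z} :=
  fun y hy => ⟨x, hy.1, fun h => hy.2 h.symm⟩

lemma spastR_finite (x : γ) : (spastR le x).Finite :=
  (hpf x).subset (fun y hy => hy.1)

lemma spastR_subset_LkS {x : γ} {k : ℕ} (hx : LvlLe le x (k+1)) :
    spastR le x ⊆ LkS le k := by
  intro y hy
  refine ⟨spastR_subset_nonmax x hy, fun m hm => ?_⟩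
  have := hx (m+1) (chainTo_snoc hpo ⟨hy.1, hy.2⟩ hm)
  omega

end Generic3

section Counting
variable {α β : Type} {leA : α → α → Prop} {leB : β → β → Prop}
  (hpoA : IsPartialOrder α leA) (hpoB : IsPartialOrder β leB)
  (hpfA : PastFinite leA) (hpfB : PastFinite leB)
include hpoA hpoB hpfA hpfB

lemma core_card_le [Nonempty α] [Nonempty β] (hstems : SameStems leB leA)
    (hfinA : ∀ k, (LkS leA k).Finite) (k : ℕ)
    (X : Finset β) (hX : ↑X ⊆ LkS leB k) : X.card ≤ (LkS leA k).ncard := by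
  classical
  obtain ⟨T, hTfin, hTlow, hTsub, hTcov⟩ :=
    exists_cover_stem hpoB hpfB X.finite_toSet (fun x hx => (hX hx).1)
  obtain ⟨F, g, hFfin, hFlow, hiso⟩ := stem_transfer hstems hTfin hTlow
  obtain ⟨g', hpair⟩ := hiso.toPair hpoB hpoA
  have hXcore : ↑X ⊆ coreS leB T k := fun x hx =>
    mem_coreS hpoB hpfB hTlow (hX hx) (hTsub hx) (hTcov x hx)
  have himg : g '' coreS leB T k = coreS leA F k := hpair.coreS_image hpoB hpoA k
  have hsub : g '' ↑X ⊆ LkS leA k := by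
    intro z hz
    obtain ⟨x, hx, rfl⟩ := hz
    exact coreS_subset_LkS hpoA hpfA hFlow (himg ▸ Set.mem_image_of_mem g (hXcore hx))
  have hinj : Set.InjOn g ↑X := (hiso.injOn hpoB hpoA).mono (fun x hx => hTsub hx)
  calc X.card = (↑X : Set β).ncard := (Set.ncard_coe_finset X).symm
    _ = (g '' ↑X).ncard := (Set.ncard_image_of_injOn hinj).symm
    _ ≤ (LkS leA k).ncard := Set.ncard_le_ncard hsub (hfinA k)

lemma LkB_finite [Nonempty α] [Nonempty β] (hstems : SameStems leB leA)
    (hfinA : ∀ k, (LkS leA k).Finite) (k : ℕ) : (LkS leB k).Finite := by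
  by_contra h
  have hinf : (LkS leB k).Infinite := (Set.not_infinite.not_right.mp h : _)
  obtain ⟨X, hXsub, hXcard⟩ := hinf.exists_subset_card_eq ((LkS leA k).ncard + 1)
  have := core_card_le hpoA hpoB hpfA hpfB hstems hfinA k X hXsub
  omega

lemma LkB_ncard_eq [Nonempty α] [Nonempty β] (hstemsAB : SameStems leA leB)
    (hfinA : ∀ k, (LkS leA k).Finite) (k : ℕ) :
    (LkS leB k).ncard = (LkS leA k).ncard := by
  classical
  have hstems := sameStems_symm hstemsAB
  have hfinB := LkB_finite hpoA hpoB hpfA hpfB hstems hfinA k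
  refine le_antisymm ?_ ?_
  · have := core_card_le hpoA hpoB hpfA hpfB hstems hfinA k hfinB.toFinset
      (by rw [Set.Finite.coe_toFinset])
    rwa [Set.ncard_eq_toFinset_card (LkS leB k) hfinB]
  · -- reverse: embed L_k(a) into b
    obtain ⟨T, hTfin, hTlow, hTsub, hTcov⟩ :=
      exists_cover_stem hpoA hpfA (hfinA k) (fun x hx => hx.1)
    obtain ⟨F, g, hFfin, hFlow, hiso⟩ := stem_transfer hstemsAB hTfin hTlow
    obtain ⟨g', hpair⟩ := hiso.toPair hpoA hpoB
    have hXcore : LkS leA k ⊆ coreS leA T k := fun x hx =>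
      mem_coreS hpoA hpfA hTlow hx (hTsub hx) (hTcov x hx)
    have himg : g '' coreS leA T k = coreS leB F k := hpair.coreS_image hpoA hpoB k
    have hsub : g '' LkS leA k ⊆ LkS leB k := by
      intro z hz
      obtain ⟨x, hx, rfl⟩ := hz
      exact coreS_subset_LkS hpoB hpfB hFlow (himg ▸ Set.mem_image_of_mem g (hXcore hx))
    have hinj : Set.InjOn g (LkS leA k) := (hiso.injOn hpoA hpoB).mono hTsub
    calc (LkS leA k).ncard = (g '' LkS leA k).ncard := (Set.ncard_image_of_injOn hinj).symm
      _ ≤ (LkS leB k).ncard := Set.ncard_le_ncard hsub hfinB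

end Counting

section HalfGoodSec
variable {α β : Type} {leA : α → α → Prop} {leB : β → β → Prop}
  (hpoA : IsPartialOrder α leA) (hpoB : IsPartialOrder β leB)
  (hpfA : PastFinite leA) (hpfB : PastFinite leB)
include hpoA hpoB hpfA hpfB

lemma half_good_bounded [Nonempty α] [Nonempty β] (hstems : SameStems leA leB)
    (hfinA : ∀ m, (LkS leA m).Finite) (hfinB : ∀ m, (LkS leB m).Finite)
    (hcard : ∀ m, (LkS leB m).ncard = (LkS leA m).ncard) (k n : ℕ) :
    ∃ f : α → β, IsoOn leA leB (LkS leA k) (LkS leB k) f ∧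
      ∀ P, LowerR leA P → P ⊆ LkS leA k → ∀ j, j ≤ n → MGE leA P j → MGE leB (f '' P) j := by
  classical
  obtain ⟨T₀, hT₀fin, hT₀low, hT₀sub, hT₀cov⟩ :=
    exists_cover_stem hpoA hpfA (hfinA (k+1)) (fun x hx => hx.1)
  have h𝒫 : {P : Set α | P ⊆ LkS leA k}.Finite := (hfinA k).finite_subsets
  choose W hWsub hWcard using fun P : Set α => exists_maxfib_witness (le := leA) n P
  set T : Set α := T₀ ∪ ⋃ P ∈ {P : Set α | P ⊆ LkS leA k}, ⋃ x ∈ (W P : Set α), pastR leA x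
    with hT
  have hTfin : T.Finite := by
    refine hT₀fin.union (h𝒫.biUnion fun P _ => ?_)
    exact (W P).finite_toSet.biUnion fun x _ => hpfA x
  have hTlow : LowerR leA T := by
    intro y z hyz hz
    rcases hz with hz | hz
    · exact Or.inl (hT₀low hyz hz)
    · simp only [Set.mem_iUnion] at hz ⊢
      obtain ⟨P, hP, x, hx, hzx⟩ := hz
      exact Or.inr (Set.mem_iUnion.mpr ⟨P, Set.mem_iUnion.mpr ⟨hP,
        Set.mem_iUnion.mpr ⟨x, Set.mem_iUnion.mpr ⟨hx, hpoA.trans _ _ _ hyz hzx⟩⟩⟩⟩)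
  have hsub1 : LkS leA (k+1) ⊆ T := fun x hx => Or.inl (hT₀sub hx)
  have hcovT : ∀ x ∈ LkS leA (k+1), ∃ y ∈ T, LtRel leA x y := by
    intro x hx
    obtain ⟨y, hyT, hlt⟩ := hT₀cov x hx
    exact ⟨y, Or.inl hyT, hlt⟩
  have hcore1 : coreS leA T (k+1) = LkS leA (k+1) := by
    refine Set.Subset.antisymm (coreS_subset_LkS hpoA hpfA hTlow) (fun x hx => ?_)
    exact mem_coreS hpoA hpfA hTlow hx (hsub1 hx) (hcovT x hx)
  have hcore0 : coreS leA T k = LkS leA k := by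
    refine Set.Subset.antisymm (coreS_subset_LkS hpoA hpfA hTlow) (fun x hx => ?_)
    exact mem_coreS hpoA hpfA hTlow hx (hsub1 (LkS_mono hpoA hpfA (Nat.le_succ k) hx))
      (hcovT x (LkS_mono hpoA hpfA (Nat.le_succ k) hx))
  have hWT : ∀ P, P ⊆ LkS leA k → ∀ x ∈ (W P : Set α), pastR leA x ⊆ T := by
    intro P hP x hx
    intro y hy
    refine Or.inr ?_
    simp only [Set.mem_iUnion]
    exact ⟨P, hP, x, hx, hy⟩
  obtain ⟨F, g, hFfin, hFlow, hiso⟩ := stem_transfer hstems hTfin hTlow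
  obtain ⟨g', hpair⟩ := hiso.toPair hpoA hpoB
  have himg1 : g '' coreS leA T (k+1) = coreS leB F (k+1) := hpair.coreS_image hpoA hpoB (k+1)
  have himg0 : g '' coreS leA T k = coreS leB F k := hpair.coreS_image hpoA hpoB k
  have hFcore1 : coreS leB F (k+1) = LkS leB (k+1) := by
    refine coreS_eq_LkS_of_ncard hFlow hpoB hpfB (hfinB (k+1)) ?_
    rw [← himg1, hcore1, Set.ncard_image_of_injOn ((hiso.injOn hpoA hpoB).mono hsub1),
      hcard (k+1)]
  have hsub0 : LkS leA k ⊆ T := fun x hx => hsub1 (LkS_mono hpoA hpfA (Nat.le_succ k) hx)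
  have hFcore0 : coreS leB F k = LkS leB k := by
    refine coreS_eq_LkS_of_ncard hFlow hpoB hpfB (hfinB k) ?_
    rw [← himg0, hcore0, Set.ncard_image_of_injOn ((hiso.injOn hpoA hpoB).mono hsub0),
      hcard k]
  have hgLk : g '' LkS leA k = LkS leB k := by rw [← hcore0, himg0, hFcore0]
  refine ⟨g, ⟨?_, ?_, ?_⟩, ?_⟩
  · intro x hx
    exact hgLk ▸ Set.mem_image_of_mem g hx
  · intro y hy
    rw [← hgLk] at hy
    exact hy
  · intro x hx y hy
    exact hiso.2.2 x (hsub0 hx) y (hsub0 hy)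
  · intro P hPlow hPk j hjn hMGE
    obtain ⟨WP, hWPsub, hWPcard⟩ := hMGE
    have hjW : j ≤ (W P).card := hWcard P j hjn ⟨WP, hWPsub, hWPcard⟩
    obtain ⟨W', hW'sub, hW'card⟩ := Finset.exists_subset_card_eq hjW
    have hW'T : ∀ x ∈ W', x ∈ T := by
      intro x hx
      exact hWT P hPk x (hW'sub hx) (hpoA.refl x)
    refine ⟨W'.image g, ?_, ?_⟩
    · intro z hz
      simp only [Finset.coe_image, Set.mem_image, Finset.mem_coe] at hz
      obtain ⟨x, hx, rfl⟩ := hz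
      have hxfib : x ∈ MaxFib leA P := hWsub P (hW'sub hx)
      have hxT : x ∈ T := hW'T x hx
      have hmaxT : MaxIn leA T x := maxIn_of_max hpoA hpfA hxfib.1 hxT
      have hmaxF : MaxIn leB F (g x) := hiso.maxIn hmaxT
      have hspF : spastR leB (g x) = g '' P := by
        rw [← spastIn_eq hpoB hpfB hFlow hmaxF.1, ← hiso.spastIn_image hpoA hpoB hxT,
          spastIn_eq hpoA hpfA hTlow hxT, hxfib.2]
      have hspLk : spastR leB (g x) ⊆ LkS leB k := by
        rw [hspF, ← hgLk]
        exact Set.image_mono hPk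
      have hmaxB : IsMaximalRel leB (g x) :=
        maximal_of_maxIn hpoB hpfB hFlow hFcore1 hmaxF hspLk
      exact ⟨hmaxB, hspF⟩
    · rw [Finset.card_image_of_injOn, hW'card]
      exact ((hiso.injOn hpoA hpoB).mono (fun x hx => hW'T x hx))

end HalfGoodSec

lemma exists_freq {X : Type} [Finite X] (F : ℕ → X) : ∃ x, ∀ N, ∃ n, N ≤ n ∧ F n = x := by
  obtain ⟨x, hx⟩ := Finite.exists_infinite_fiber F
  have hinf : (F ⁻¹' {x}).Infinite := Set.infinite_coe_iff.mp hx
  refine ⟨x, fun N => ?_⟩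
  by_contra h
  push_neg at h
  refine hinf (Set.Finite.subset (Set.finite_Iio N) ?_)
  intro n hn
  simp only [Set.mem_Iio]
  by_contra hlt
  exact h n (by omega) hn

section HalfFullSec
variable {α β : Type} {leA : α → α → Prop} {leB : β → β → Prop}
  (hpoA : IsPartialOrder α leA) (hpoB : IsPartialOrder β leB)
  (hpfA : PastFinite leA) (hpfB : PastFinite leB)
include hpoA hpoB hpfA hpfB

lemma half_good_full [Nonempty α] [Nonempty β] (hstems : SameStems leA leB)
    (hfinA : ∀ m, (LkS leA m).Finite) (hfinB : ∀ m, (LkS leB m).Finite)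
    (hcard : ∀ m, (LkS leB m).ncard = (LkS leA m).ncard) (k : ℕ) :
    ∃ f : α → β, HalfGood leA leB k f := by
  classical
  choose f hfiso hfmge using half_good_bounded hpoA hpoB hpfA hpfB hstems hfinA hfinB hcard k
  have : Finite ↥(LkS leA k) := (hfinA k).to_subtype
  have : Finite ↥(LkS leB k) := (hfinB k).to_subtype
  obtain ⟨r, hr⟩ := exists_freq (fun n => Set.MapsTo.restrict (f n) _ _ (hfiso n).1)
  obtain ⟨n₀, -, hn₀⟩ := hr 0
  have heq : ∀ n, (Set.MapsTo.restrict (f n) _ _ (hfiso n).1) = r →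
      ∀ x ∈ LkS leA k, f n x = f n₀ x := by
    intro n hn x hx
    have := congrFun (hn.trans hn₀.symm) ⟨x, hx⟩
    exact congrArg Subtype.val this
  refine ⟨f n₀, (hfiso n₀), fun P hPlow hPk j hMGE => ?_⟩
  obtain ⟨n, hnj, hn⟩ := hr j
  have h1 : MGE leB (f n '' P) j := hfmge n P hPlow hPk j hnj hMGE
  have himg : f n '' P = f n₀ '' P := Set.image_congr (fun x hx => heq n hn x (hPk hx))
  rwa [himg] at h1

lemma isoOn_image_lower {k : ℕ} {f : α → β}
    (hiso : IsoOn leA leB (LkS leA k) (LkS leB k) f) {P : Set α}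
    (hPlow : LowerR leA P) (hPk : P ⊆ LkS leA k) :
    LowerR leB (f '' P) ∧ f '' P ⊆ LkS leB k := by
  constructor
  · intro z y hzy hy
    obtain ⟨x, hxP, rfl⟩ := hy
    have hzLk : z ∈ LkS leB k := lower_LkS hpoB hpfB k hzy (hiso.1 (hPk hxP))
    obtain ⟨w, hwLk, rfl⟩ := hiso.2.1 hzLk
    have : leA w x := (hiso.2.2 w hwLk x (hPk hxP)).mpr hzy
    exact Set.mem_image_of_mem f (hPlow this hxP)
  · intro z hz
    obtain ⟨x, hxP, rfl⟩ := hz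
    exact hiso.1 (hPk hxP)

lemma good_exists [Nonempty α] [Nonempty β] (hstems : SameStems leA leB)
    (hfinA : ∀ m, (LkS leA m).Finite) (hfinB : ∀ m, (LkS leB m).Finite)
    (hcard : ∀ m, (LkS leB m).ncard = (LkS leA m).ncard) (k : ℕ) :
    ∃ f : α → β, GoodIso leA leB k f := by
  classical
  obtain ⟨f, hfiso, hf⟩ := half_good_full hpoA hpoB hpfA hpfB hstems hfinA hfinB hcard k
  obtain ⟨g, hgiso, hg⟩ := half_good_full hpoB hpoA hpfB hpfA (sameStems_symm hstems)
    hfinB hfinA (fun m => (hcard m).symm) k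
  have hfinLkA : Finite ↥(LkS leA k) := (hfinA k).to_subtype
  set σ : ↥(LkS leA k) → ↥(LkS leA k) := fun x => ⟨g (f x.1), hgiso.1 (hfiso.1 x.2)⟩ with hσ
  have hσinj : Function.Injective σ := by
    intro x y hxy
    have h1 : g (f x.1) = g (f y.1) := congrArg Subtype.val hxy
    have h2 : f x.1 = f y.1 :=
      (hgiso.injOn hpoB hpoA) (hfiso.1 x.2) (hfiso.1 y.2) h1
    exact Subtype.ext ((hfiso.injOn hpoA hpoB) x.2 y.2 h2)
  obtain ⟨m₁, m₂, hne, hmeq⟩ :=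
    Finite.exists_ne_map_eq_of_infinite (fun m : ℕ => σ^[m])
  wlog hlt : m₁ < m₂ generalizing m₁ m₂
  · exact this m₂ m₁ hne.symm hmeq.symm (by omega)
  set r := m₂ - m₁ with hrdef
  have hrpos : 1 ≤ r := by omega
  have hσr : σ^[r] = id := by
    funext x
    have h2 : σ^[m₁ + r] x = σ^[m₁] x := by
      rw [show m₁ + r = m₂ by omega, hmeq]
    have h3 : σ^[m₁] (σ^[r] x) = σ^[m₁] x := by
      rw [← Function.iterate_add_apply]; exact h2
    exact hσinj.iterate m₁ h3
  set GF : α → α := fun x => g (f x) with hGF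
  have hGFit : ∀ m (x : α) (hx : x ∈ LkS leA k), GF^[m] x = (σ^[m] ⟨x, hx⟩).1 := by
    intro m
    induction m with
    | zero => intro x hx; rfl
    | succ m ih =>
      intro x hx
      rw [Function.iterate_succ_apply', Function.iterate_succ_apply', ih x hx]
  have hGFr : ∀ x ∈ LkS leA k, GF^[r] x = x := by
    intro x hx
    rw [hGFit r x hx, hσr]
    rfl
  set S : Set α → Set α := fun P => g '' (f '' P) with hS
  have hstep : ∀ P, LowerR leA P → P ⊆ LkS leA k →
      (LowerR leA (S P) ∧ S P ⊆ LkS leA k) := by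
    intro P hPlow hPk
    have h1 := isoOn_image_lower hpoA hpoB hpfA hpfB hfiso hPlow hPk
    exact isoOn_image_lower hpoB hpoA hpfB hpfA hgiso h1.1 h1.2
  have hchain : ∀ m P, LowerR leA P → P ⊆ LkS leA k → ∀ j,
      MGE leB (f '' P) j → MGE leA (S^[m + 1] P) j := by
    intro m
    induction m with
    | zero =>
      intro P hPlow hPk j hMGE
      simpa using hg (f '' P) (isoOn_image_lower hpoA hpoB hpfA hpfB hfiso hPlow hPk).1
        (isoOn_image_lower hpoA hpoB hpfA hpfB hfiso hPlow hPk).2 j hMGE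
    | succ m ih =>
      intro P hPlow hPk j hMGE
      have h1 : MGE leA (S P) j := hg (f '' P)
        (isoOn_image_lower hpoA hpoB hpfA hpfB hfiso hPlow hPk).1
        (isoOn_image_lower hpoA hpoB hpfA hpfB hfiso hPlow hPk).2 j hMGE
      have h2 : MGE leB (f '' S P) j := hf (S P) (hstep P hPlow hPk).1 (hstep P hPlow hPk).2 j h1
      have h3 := ih (S P) (hstep P hPlow hPk).1 (hstep P hPlow hPk).2 j h2
      rwa [← Function.iterate_succ_apply] at h3
  have hSiter : ∀ m P, S^[m] P = GF^[m] '' P := by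
    intro m
    induction m with
    | zero => intro P; simp
    | succ m ih =>
      intro P
      rw [Function.iterate_succ_apply', ih, Function.iterate_succ', Set.image_comp]
      show g '' (f '' (GF^[m] '' P)) = _
      rw [Set.image_image]
  have hfix : ∀ P, P ⊆ LkS leA k → S^[r] P = P := by
    intro P hPk
    rw [hSiter]
    have : ∀ x ∈ P, GF^[r] x = x := fun x hx => hGFr x (hPk hx)
    rw [Set.image_congr this, Set.image_id']
  refine ⟨f, hfiso, fun P hPlow hPk j => ⟨fun h => hf P hPlow hPk j h, fun h => ?_⟩⟩
  have := hchain (r - 1) P hPlow hPk j h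
  rwa [show r - 1 + 1 = r by omega, hfix P hPk] at this

end HalfFullSec

/-- persistent good isomorphism at level `k` -/
def PersIso {α β : Type} (leA : α → α → Prop) (leB : β → β → Prop) (k : ℕ) (f : α → β) : Prop :=
  GoodIso leA leB k f ∧
    ∀ m, k ≤ m → ∃ f', GoodIso leA leB m f' ∧ Set.EqOn f f' (LkS leA k)

section PersSec
variable {α β : Type} {leA : α → α → Prop} {leB : β → β → Prop}
  (hpoA : IsPartialOrder α leA) (hpoB : IsPartialOrder β leB)
  (hpfA : PastFinite leA) (hpfB : PastFinite leB)
include hpoA hpoB hpfA hpfB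

lemma isoOn_lvlLe [Nonempty α] {m : ℕ} {f : α → β}
    (hiso : IsoOn leA leB (LkS leA m) (LkS leB m) f) {x : α} (hx : x ∈ LkS leA m) (k : ℕ) :
    LvlLe leA x k ↔ LvlLe leB (f x) k := by
  obtain ⟨g', hpair⟩ := hiso.toPair hpoA hpoB
  rw [← lvlLeIn_iff hpoA hpfA (lower_LkS hpoA hpfA m) hx,
    ← lvlLeIn_iff hpoB hpfB (lower_LkS hpoB hpfB m) (hiso.1 hx)]
  exact hpair.lvlLeIn hpoA hpoB hx

lemma good_mono [Nonempty α] {k m : ℕ} (hkm : k ≤ m) {f : α → β}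
    (h : GoodIso leA leB m f) : GoodIso leA leB k f := by
  obtain ⟨hiso, hmge⟩ := h
  have hsubA : LkS leA k ⊆ LkS leA m := LkS_mono hpoA hpfA hkm
  have hsubB : LkS leB k ⊆ LkS leB m := LkS_mono hpoB hpfB hkm
  refine ⟨⟨?_, ?_, ?_⟩, ?_⟩
  · intro x hx
    refine ⟨(hiso.1 (hsubA hx)).1, ?_⟩
    exact (isoOn_lvlLe hpoA hpoB hpfA hpfB hiso (hsubA hx) k).mp hx.2
  · intro y hy
    obtain ⟨x, hxm, rfl⟩ := hiso.2.1 (hsubB hy)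
    refine ⟨x, ⟨hxm.1, ?_⟩, rfl⟩
    exact (isoOn_lvlLe hpoA hpoB hpfA hpfB hiso hxm k).mpr hy.2
  · intro x hx y hy
    exact hiso.2.2 x (hsubA hx) y (hsubA hy)
  · intro P hPlow hPk j
    exact hmge P hPlow (fun x hx => hsubA (hPk hx)) j

lemma pers_exists [Nonempty α] [Nonempty β] (hstems : SameStems leA leB)
    (hfinA : ∀ m, (LkS leA m).Finite) (hfinB : ∀ m, (LkS leB m).Finite)
    (hcard : ∀ m, (LkS leB m).ncard = (LkS leA m).ncard) (k : ℕ) :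
    ∃ f, PersIso leA leB k f := by
  classical
  have hex : ∀ m : ℕ, ∃ f, GoodIso leA leB (max k m) f :=
    fun m => good_exists hpoA hpoB hpfA hpfB hstems hfinA hfinB hcard (max k m)
  choose f hf using hex
  have hgk : ∀ m, GoodIso leA leB k (f m) :=
    fun m => good_mono hpoA hpoB hpfA hpfB (le_max_left k m) (hf m)
  have : Finite ↥(LkS leA k) := (hfinA k).to_subtype
  have : Finite ↥(LkS leB k) := (hfinB k).to_subtype
  obtain ⟨r, hr⟩ := exists_freq (fun m => Set.MapsTo.restrict (f m) _ _ (hgk m).1.1)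
  obtain ⟨n₀, -, hn₀⟩ := hr 0
  have heq : ∀ n, (Set.MapsTo.restrict (f n) _ _ (hgk n).1.1) = r →
      Set.EqOn (f n₀) (f n) (LkS leA k) := by
    intro n hn x hx
    exact (congrArg Subtype.val (congrFun (hn₀.trans hn.symm) ⟨x, hx⟩) : _)
  refine ⟨f n₀, hgk n₀, fun m hkm => ?_⟩
  obtain ⟨n, hnm, hn⟩ := hr m
  refine ⟨f n, good_mono hpoA hpoB hpfA hpfB ?_ (hf n), heq n hn⟩
  omega

lemma pers_extend [Nonempty α] [Nonempty β]
    (hfinA : ∀ m, (LkS leA m).Finite) (hfinB : ∀ m, (LkS leB m).Finite)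
    (k : ℕ) (f : α → β) (hpers : PersIso leA leB k f) :
    ∃ f', PersIso leA leB (k+1) f' ∧ Set.EqOn f f' (LkS leA k) := by
  classical
  have hex : ∀ m : ℕ, ∃ g, GoodIso leA leB (max (k+1) m) g ∧
      Set.EqOn f g (LkS leA k) :=
    fun m => hpers.2 (max (k+1) m) (le_trans (Nat.le_succ k) (le_max_left _ _))
  choose g hg hgeq using hex
  have hgk : ∀ m, GoodIso leA leB (k+1) (g m) :=
    fun m => good_mono hpoA hpoB hpfA hpfB (le_max_left (k+1) m) (hg m)
  have : Finite ↥(LkS leA (k+1)) := (hfinA (k+1)).to_subtype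
  have : Finite ↥(LkS leB (k+1)) := (hfinB (k+1)).to_subtype
  obtain ⟨r, hr⟩ := exists_freq (fun m => Set.MapsTo.restrict (g m) _ _ (hgk m).1.1)
  obtain ⟨n₀, -, hn₀⟩ := hr 0
  have heq : ∀ n, (Set.MapsTo.restrict (g n) _ _ (hgk n).1.1) = r →
      Set.EqOn (g n₀) (g n) (LkS leA (k+1)) := by
    intro n hn x hx
    exact (congrArg Subtype.val (congrFun (hn₀.trans hn.symm) ⟨x, hx⟩) : _)
  refine ⟨g n₀, ⟨hgk n₀, fun m hkm => ?_⟩, hgeq n₀⟩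
  obtain ⟨n, hnm, hn⟩ := hr m
  refine ⟨g n, good_mono hpoA hpoB hpfA hpfB ?_ (hg n), heq n hn⟩
  omega

end PersSec

section SeqSec
variable {α β : Type} {leA : α → α → Prop} {leB : β → β → Prop}
  (hpoA : IsPartialOrder α leA) (hpoB : IsPartialOrder β leB)
  (hpfA : PastFinite leA) (hpfB : PastFinite leB)
include hpoA hpoB hpfA hpfB

lemma seq_exists [Nonempty α] [Nonempty β] (hstems : SameStems leA leB)
    (hfinA : ∀ m, (LkS leA m).Finite) (hfinB : ∀ m, (LkS leB m).Finite)
    (hcard : ∀ m, (LkS leB m).ncard = (LkS leA m).ncard) :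
    ∃ seq : ℕ → (α → β), (∀ k, GoodIso leA leB k (seq k)) ∧
      ∀ k m, k ≤ m → Set.EqOn (seq k) (seq m) (LkS leA k) := by
  classical
  obtain ⟨f₀, hf₀⟩ := pers_exists hpoA hpoB hpfA hpfB hstems hfinA hfinB hcard 0
  choose next hnext heqon using pers_extend hpoA hpoB hpfA hpfB hfinA hfinB
  let T : ℕ → Type := fun k => {f : α → β // PersIso leA leB k f}
  let seqS : (k : ℕ) → T k := fun k =>
    Nat.rec (⟨f₀, hf₀⟩ : T 0) (fun k prev => ⟨next k prev.1 prev.2, hnext k prev.1 prev.2⟩) k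
  have hstep : ∀ k, Set.EqOn ((seqS k).1) ((seqS (k+1)).1) (LkS leA k) :=
    fun k => heqon k (seqS k).1 (seqS k).2
  refine ⟨fun k => (seqS k).1, fun k => (seqS k).2.1, fun k m hkm => ?_⟩
  induction m with
  | zero =>
    have : k = 0 := by omega
    subst this
    exact fun x _ => rfl
  | succ m ih =>
    rcases Nat.lt_or_ge k (m+1) with h | h
    · have hkm' : k ≤ m := by omega
      intro x hx
      rw [ih hkm' hx]
      exact hstep m (LkS_mono hpoA hpfA hkm' hx)
    · have : k = m + 1 := by omega
      subst this
      exact fun x _ => rfl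

end SeqSec

section FibEquiv
variable {γ : Type} {le : γ → γ → Prop}

lemma mge_iff_le_ncard {P : Set γ} (hfin : (MaxFib le P).Finite) (j : ℕ) :
    MGE le P j ↔ j ≤ (MaxFib le P).ncard := by
  constructor
  · rintro ⟨W, hW, rfl⟩
    calc W.card = (↑W : Set γ).ncard := (Set.ncard_coe_finset W).symm
      _ ≤ _ := Set.ncard_le_ncard hW hfin
  · intro hj
    refine ⟨?_, ?_, ?_⟩
    · exact (Finset.exists_subset_card_eq (s := hfin.toFinset) (n := j)
        (by rwa [← Set.ncard_eq_toFinset_card _ hfin])).choose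
    · have h := (Finset.exists_subset_card_eq (s := hfin.toFinset) (n := j)
        (by rwa [← Set.ncard_eq_toFinset_card _ hfin])).choose_spec
      intro x hx
      have := h.1 hx
      rwa [Set.Finite.mem_toFinset] at this
    · exact (Finset.exists_subset_card_eq (s := hfin.toFinset) (n := j)
        (by rwa [← Set.ncard_eq_toFinset_card _ hfin])).choose_spec.2

lemma mge_all_of_infinite {P : Set γ} (hinf : (MaxFib le P).Infinite) (j : ℕ) :
    MGE le P j := by
  obtain ⟨W, hW, hc⟩ := hinf.exists_subset_card_eq j
  exact ⟨W, hW, hc⟩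

end FibEquiv

lemma fib_equiv_of_MGE {α β : Type} [Countable α] [Countable β]
    {leA : α → α → Prop} {leB : β → β → Prop} {P : Set α} {Q : Set β}
    (h : ∀ j, MGE leA P j ↔ MGE leB Q j) :
    Nonempty (↥(MaxFib leA P) ≃ ↥(MaxFib leB Q)) := by
  classical
  by_cases hA : (MaxFib leA P).Finite
  · by_cases hB : (MaxFib leB Q).Finite
    · have h1 : (MaxFib leA P).ncard ≤ (MaxFib leB Q).ncard := by
        rw [← mge_iff_le_ncard hB]
        rw [← h]
        exact (mge_iff_le_ncard hA _).mpr le_rfl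
      have h2 : (MaxFib leB Q).ncard ≤ (MaxFib leA P).ncard := by
        rw [← mge_iff_le_ncard hA, h]
        exact (mge_iff_le_ncard hB _).mpr le_rfl
      have hcard : (MaxFib leA P).ncard = (MaxFib leB Q).ncard := le_antisymm h1 h2
      have : Finite ↥(MaxFib leA P) := hA.to_subtype
      have : Finite ↥(MaxFib leB Q) := hB.to_subtype
      refine Finite.card_eq.mp ?_
      rwa [Nat.card_coe_set_eq, Nat.card_coe_set_eq]
    · exfalso
      have hinf : (MaxFib leB Q).Infinite := (hB : _)
      have := (h ((MaxFib leA P).ncard + 1)).mpr (mge_all_of_infinite hinf _)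
      have := (mge_iff_le_ncard hA _).mp this
      omega
  · by_cases hB : (MaxFib leB Q).Finite
    · exfalso
      have hinf : (MaxFib leA P).Infinite := (hA : _)
      have := (h ((MaxFib leB Q).ncard + 1)).mp (mge_all_of_infinite hinf _)
      have := (mge_iff_le_ncard hB _).mp this
      omega
    · have hinfA : (MaxFib leA P).Infinite := (hA : _)
      have hinfB : (MaxFib leB Q).Infinite := (hB : _)
      have iA : Infinite ↥(MaxFib leA P) := Set.infinite_coe_iff.mpr hinfA
      have iB : Infinite ↥(MaxFib leB Q) := Set.infinite_coe_iff.mpr hinfB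
      have cA : Cardinal.mk ↥(MaxFib leA P) = Cardinal.aleph0 := Cardinal.mk_eq_aleph0 _
      have cB : Cardinal.mk ↥(MaxFib leB Q) = Cardinal.aleph0 := Cardinal.mk_eq_aleph0 _
      exact Cardinal.eq.mp (cA.trans cB.symm)

lemma nonempty_of_stems {α β : Type} {leA : α → α → Prop} {leB : β → β → Prop}
    (hpoA : IsPartialOrder α leA) (hpfA : PastFinite leA)
    (hstems : SameStems leA leB) [hne : Nonempty α] : Nonempty β := by
  classical
  obtain ⟨x⟩ := hne
  have hTfin : (pastR leA x).Finite := hpfA x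
  have hTlow : LowerR leA (pastR leA x) := pastR_lower hpoA hpfA x
  obtain ⟨n, e, hstem⟩ := stem_gives_isStemIn hTfin hTlow
  obtain ⟨u, -, -, -⟩ := (hstems n _).mp hstem
  have : Nonempty (Fin n) := Nonempty.map e ⟨⟨x, hpoA.refl x⟩⟩
  obtain ⟨i⟩ := this
  exact ⟨u i⟩

/-- **Θ ⊆ Γ**
stems. If every level of `a` contains only finitely many non-maximal elements, then
`a` and `b` are order-isomorphic. -/
theorem theta_subset_gamma (α β : Type) (leA : α → α → Prop) (leB : β → β → Prop)
    (hpoA : IsPartialOrder α leA) (hpoB : IsPartialOrder β leB)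
    (hcA : Countable α) (hcB : Countable β)
    (hpfA : PastFinite leA) (hpfB : PastFinite leB)
    (hstems : SameStems leA leB)
    (hfin : ∀ k : ℕ, {x : α | HasLevel leA x k ∧ ¬ IsMaximalRel leA x}.Finite) :
    OrderIsoRel leA leB := by
  classical
  by_cases hne : Nonempty α
  case neg =>
    have hea : IsEmpty α := not_nonempty_iff.mp hne
    have heb : IsEmpty β := by
      by_contra hb
      have hgb : Nonempty β := not_isEmpty_iff.mp hb
      exact hne (nonempty_of_stems hpoB hpfB (sameStems_symm hstems))
    exact ⟨Equiv.equivOfIsEmpty α β, fun x y => isEmptyElim x⟩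
  have : Nonempty α := hne
  have hneB : Nonempty β := nonempty_of_stems hpoA hpfA hstems
  have hfinA : ∀ k, (LkS leA k).Finite := fun k => LkS_finite hpoA hpfA hfin k
  have hfinB : ∀ k, (LkS leB k).Finite :=
    LkB_finite hpoA hpoB hpfA hpfB (sameStems_symm hstems) hfinA
  have hcard : ∀ k, (LkS leB k).ncard = (LkS leA k).ncard :=
    fun k => LkB_ncard_eq hpoA hpoB hpfA hpfB hstems hfinA k
  obtain ⟨seq, hseqG, hseqE⟩ :=
    seq_exists hpoA hpoB hpfA hpfB hstems hfinA hfinB hcard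
  choose lvl hlvl using exists_hasLevel hpoA hpfA
  set φ : α → β := fun x => seq (lvl x) x with hφdef
  have hmemL : ∀ x, NonMaxR leA x → x ∈ LkS leA (lvl x) := fun x h => ⟨h, (hlvl x).2⟩
  have hφeq : ∀ k x, x ∈ LkS leA k → φ x = seq k x := by
    intro k x hx
    exact hseqE (lvl x) k (hx.2 _ (hlvl x).1) (hmemL x hx.1)
  have hφmaps : ∀ k x, x ∈ LkS leA k → φ x ∈ LkS leB k := by
    intro k x hx
    rw [hφeq k x hx]
    exact (hseqG k).1.1 hx
  have hφnm : ∀ x, NonMaxR leA x → NonMaxR leB (φ x) :=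
    fun x h => (hφmaps _ x (hmemL x h)).1
  have hφord : ∀ x y, NonMaxR leA x → NonMaxR leA y → (leA x y ↔ leB (φ x) (φ y)) := by
    intro x y hx hy
    have hxk : x ∈ LkS leA (max (lvl x) (lvl y)) :=
      LkS_mono hpoA hpfA (le_max_left _ _) (hmemL x hx)
    have hyk : y ∈ LkS leA (max (lvl x) (lvl y)) :=
      LkS_mono hpoA hpfA (le_max_right _ _) (hmemL y hy)
    rw [hφeq _ x hxk, hφeq _ y hyk]
    exact (hseqG _).1.2.2 x hxk y hyk
  have hφinj : ∀ x y, NonMaxR leA x → NonMaxR leA y → φ x = φ y → x = y := by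
    intro x y hx hy hxy
    have hxk : x ∈ LkS leA (max (lvl x) (lvl y)) :=
      LkS_mono hpoA hpfA (le_max_left _ _) (hmemL x hx)
    have hyk : y ∈ LkS leA (max (lvl x) (lvl y)) :=
      LkS_mono hpoA hpfA (le_max_right _ _) (hmemL y hy)
    rw [hφeq _ x hxk, hφeq _ y hyk] at hxy
    exact ((hseqG _).1.injOn hpoA hpoB) hxk hyk hxy
  have hφsurj : ∀ y : β, NonMaxR leB y → ∃ x, NonMaxR leA x ∧ φ x = y := by
    intro y hy
    obtain ⟨m, hm⟩ := exists_hasLevel hpoB hpfB y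
    obtain ⟨x, hxk, rfl⟩ := (hseqG m).1.2.1 (⟨hy, hm.2⟩ : y ∈ LkS leB m)
    exact ⟨x, hxk.1, hφeq m x hxk⟩
  have hφMGE : ∀ P : Set α, LowerR leA P → P.Finite → (∀ x ∈ P, NonMaxR leA x) →
      ∀ j, (MGE leA P j ↔ MGE leB (φ '' P) j) := by
    intro P hPl hPf hPnm j
    obtain ⟨k, hk⟩ := (hPf.image lvl).bddAbove
    have hPk : P ⊆ LkS leA k := fun x hx =>
      ⟨hPnm x hx, fun m hm => le_trans (le_trans ((hlvl x).2 m hm)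
        (le_refl _)) (hk (Set.mem_image_of_mem lvl hx))⟩
    have himg : φ '' P = seq k '' P := Set.image_congr (fun x hx => hφeq k x (hPk hx))
    rw [himg]
    exact (hseqG k).2 P hPl hPk j
  have himgInj : ∀ P P' : Set α, (∀ x ∈ P, NonMaxR leA x) → (∀ x ∈ P', NonMaxR leA x) →
      φ '' P = φ '' P' → P = P' := by
    have hsub : ∀ P P' : Set α, (∀ x ∈ P, NonMaxR leA x) → (∀ x ∈ P', NonMaxR leA x) →
        φ '' P ⊆ φ '' P' → P ⊆ P' := by
      intro P P' hP hP' himg x hx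
      obtain ⟨x', hx', hxx'⟩ := himg (Set.mem_image_of_mem φ hx)
      rwa [← hφinj x' x (hP' x' hx') (hP x hx) hxx']
    intro P P' hP hP' h
    exact Set.Subset.antisymm (hsub P P' hP hP' h.le) (hsub P' P hP' hP h.ge)
  -- fiber equivalences for maximal elements
  have hfib : ∀ P : Set α, LowerR leA P → P.Finite → (∀ x ∈ P, NonMaxR leA x) →
      Nonempty (↥(MaxFib leA P) ≃ ↥(MaxFib leB (φ '' P))) :=
    fun P h1 h2 h3 => fib_equiv_of_MGE (hφMGE P h1 h2 h3)
  let ch : ∀ P : Set α, LowerR leA P → P.Finite → (∀ x ∈ P, NonMaxR leA x) →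
      (↥(MaxFib leA P) ≃ ↥(MaxFib leB (φ '' P))) := fun P h1 h2 h3 => (hfib P h1 h2 h3).some
  have hself : ∀ x, ¬ NonMaxR leA x → x ∈ MaxFib leA (spastR leA x) := by
    intro x hx
    refine ⟨?_, rfl⟩
    by_contra hmax
    exact hx ((nonMaxR_iff hpoA hpfA).mpr hmax)
  set e : α → β := fun x =>
    if hx : NonMaxR leA x then φ x
    else (ch (spastR leA x) (spastR_lower' hpoA x) (spastR_finite hpoA hpfA x)
      (fun y hy => spastR_subset_nonmax x hy) ⟨x, hself x hx⟩ : β) with hedef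
  have heNM : ∀ x, NonMaxR leA x → e x = φ x := by
    intro x hx
    simp only [hedef, dif_pos hx]
  have heM : ∀ x, ¬ NonMaxR leA x → e x ∈ MaxFib leB (φ '' spastR leA x) := by
    intro x hx
    simp only [hedef, dif_neg hx]
    exact Subtype.coe_prop _
  have hchcongr : ∀ (P P' : Set α) (hPP : P = P') (h1 : LowerR leA P) (h2 : P.Finite)
      (h3 : ∀ x ∈ P, NonMaxR leA x) (h1' : LowerR leA P') (h2' : P'.Finite)
      (h3' : ∀ x ∈ P', NonMaxR leA x)
      (z : ↥(MaxFib leA P)) (z' : ↥(MaxFib leA P')), (z : α) = (z' : α) →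
      ((ch P h1 h2 h3 z : β) = (ch P' h1' h2' h3' z' : β)) := by
    intro P P' hPP
    subst hPP
    intro h1 h2 h3 h1' h2' h3' z z' hzz
    have : z = z' := Subtype.ext hzz
    rw [this]
  have heInj : Function.Injective e := by
    intro x y hxy
    by_cases hx : NonMaxR leA x <;> by_cases hy : NonMaxR leA y
    · rw [heNM x hx, heNM y hy] at hxy
      exact hφinj x y hx hy hxy
    · exfalso
      have h1 : NonMaxR leB (e x) := by rw [heNM x hx]; exact hφnm x hx
      have h2 : IsMaximalRel leB (e y) := (heM y hy).1
      rw [hxy] at h1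
      exact (nonMaxR_iff hpoB hpfB).mp h1 h2
    · exfalso
      have h1 : NonMaxR leB (e y) := by rw [heNM y hy]; exact hφnm y hy
      have h2 : IsMaximalRel leB (e x) := (heM x hx).1
      rw [← hxy] at h1
      exact (nonMaxR_iff hpoB hpfB).mp h1 h2
    · have h1 := heM x hx
      have h2 := heM y hy
      have hsp : φ '' spastR leA x = φ '' spastR leA y := by
        rw [← h1.2, ← h2.2, hxy]
      have hPP : spastR leA x = spastR leA y :=
        himgInj _ _ (fun z hz => spastR_subset_nonmax x hz)
          (fun z hz => spastR_subset_nonmax y hz) hsp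
      have hx' := hself x hx
      have hy' := hself y hy
      have hy'' : y ∈ MaxFib leA (spastR leA x) := hPP ▸ hy'
      have hcx : e x = (ch (spastR leA x) (spastR_lower' hpoA x) (spastR_finite hpoA hpfA x)
          (fun z hz => spastR_subset_nonmax x hz) ⟨x, hx'⟩ : β) := by
        simp only [hedef, dif_neg hx]
      have hcy : e y = (ch (spastR leA x) (spastR_lower' hpoA x) (spastR_finite hpoA hpfA x)
          (fun z hz => spastR_subset_nonmax x hz) ⟨y, hy''⟩ : β) := by
        simp only [hedef, dif_neg hy]
        exact hchcongr (spastR leA y) (spastR leA x) hPP.symm (spastR_lower' hpoA y)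
          (spastR_finite hpoA hpfA y) (fun z hz => spastR_subset_nonmax y hz)
          (spastR_lower' hpoA x) (spastR_finite hpoA hpfA x)
          (fun z hz => spastR_subset_nonmax x hz) ⟨y, hself y hy⟩ ⟨y, hy''⟩ rfl
      rw [hcx, hcy] at hxy
      have := (ch (spastR leA x) (spastR_lower' hpoA x) (spastR_finite hpoA hpfA x)
        (fun z hz => spastR_subset_nonmax x hz)).injective (Subtype.ext hxy)
      exact congrArg Subtype.val this
  have heSurj : Function.Surjective e := by
    intro y
    by_cases hy : NonMaxR leB y
    · obtain ⟨x, hx, hfx⟩ := hφsurj y hy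
      exact ⟨x, by rw [heNM x hx, hfx]⟩
    · have hymax : IsMaximalRel leB y := by
        by_contra hm
        exact hy ((nonMaxR_iff hpoB hpfB).mpr hm)
      set Q := spastR leB y with hQ
      set P := {x : α | NonMaxR leA x ∧ φ x ∈ Q} with hPdef
      have hPnm : ∀ x ∈ P, NonMaxR leA x := fun x hx => hx.1
      have hPl : LowerR leA P := by
        intro x' x hx'x hx
        refine ⟨nonMax_of_le hpoA hpfA hx'x hx.1, ?_⟩
        have h1 : leB (φ x') (φ x) :=
          (hφord x' x (nonMax_of_le hpoA hpfA hx'x hx.1) hx.1).mp hx'x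
        exact spastR_lower' hpoB y h1 hx.2
      have hQfin : Q.Finite := spastR_finite hpoB hpfB y
      have hPfin : P.Finite := by
        have himg : φ '' P ⊆ Q := by rintro z ⟨x, hx, rfl⟩; exact hx.2
        exact Set.Finite.of_finite_image (hQfin.subset himg)
          (fun a ha b hb hab => hφinj a b ha.1 hb.1 hab)
      have himgPQ : φ '' P = Q := by
        refine Set.Subset.antisymm (by rintro z ⟨x, hx, rfl⟩; exact hx.2) ?_
        intro z hz
        have hznm : NonMaxR leB z := ⟨y, hz.1, fun h => hz.2 h.symm⟩
        obtain ⟨x, hxnm, rfl⟩ := hφsurj z hznm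
        exact Set.mem_image_of_mem φ ⟨hxnm, hz⟩
      have hyfib : y ∈ MaxFib leB (φ '' P) := ⟨hymax, by rw [himgPQ]⟩
      set c := ch P hPl hPfin hPnm with hc
      set w := c.symm ⟨y, hyfib⟩ with hw
      have hwfib : (w : α) ∈ MaxFib leA P := w.2
      have hwmax : ¬ NonMaxR leA (w : α) := fun h => (nonMaxR_iff hpoA hpfA).mp h hwfib.1
      refine ⟨(w : α), ?_⟩
      have hcw : e (w : α) = (ch (spastR leA (w : α)) (spastR_lower' hpoA _)
          (spastR_finite hpoA hpfA _) (fun z hz => spastR_subset_nonmax _ hz)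
          ⟨(w : α), hself _ hwmax⟩ : β) := by
        simp only [hedef, dif_neg hwmax]
      rw [hcw]
      have hspw : spastR leA (w : α) = P := hwfib.2
      have h2 : (ch (spastR leA (w : α)) (spastR_lower' hpoA _) (spastR_finite hpoA hpfA _)
          (fun z hz => spastR_subset_nonmax _ hz) ⟨(w : α), hself _ hwmax⟩ : β)
          = (c ⟨(w : α), hwfib⟩ : β) := hchcongr (spastR leA (w : α)) P hspw
          (spastR_lower' hpoA _) (spastR_finite hpoA hpfA _)
          (fun z hz => spastR_subset_nonmax _ hz) hPl hPfin hPnm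
          ⟨(w : α), hself _ hwmax⟩ ⟨(w : α), hwfib⟩ rfl
      rw [h2]
      have h3 : (⟨(w : α), hwfib⟩ : ↥(MaxFib leA P)) = w := Subtype.ext rfl
      rw [h3, hw]
      rw [Equiv.apply_symm_apply]
  have heOrd : ∀ x y, leA x y ↔ leB (e x) (e y) := by
    intro x y
    by_cases hx : NonMaxR leA x
    · by_cases hy : NonMaxR leA y
      · rw [heNM x hx, heNM y hy]
        exact hφord x y hx hy
      · have hymax : IsMaximalRel leA y := by
          by_contra hm
          exact hy ((nonMaxR_iff hpoA hpfA).mpr hm)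
        have hyfib := heM y hy
        constructor
        · intro hxy
          have hne' : x ≠ y := by
            rintro rfl
            exact (nonMaxR_iff hpoA hpfA).mp hx hymax
          have hxsp : x ∈ spastR leA y := ⟨hxy, hne'⟩
          have : φ x ∈ spastR leB (e y) := by
            rw [hyfib.2]
            exact Set.mem_image_of_mem φ hxsp
          rw [heNM x hx]
          exact this.1
        · intro hxy
          rw [heNM x hx] at hxy
          have hne' : φ x ≠ e y := by
            intro h
            have h1 : NonMaxR leB (e y) := h ▸ hφnm x hx
            exact (nonMaxR_iff hpoB hpfB).mp h1 hyfib.1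
          have : φ x ∈ spastR leB (e y) := ⟨hxy, hne'⟩
          rw [hyfib.2] at this
          obtain ⟨z, hzsp, hzx⟩ := this
          have : z = x := hφinj z x (spastR_subset_nonmax y hzsp) hx hzx
          rw [← this]
          exact hzsp.1
    · have hxmax : IsMaximalRel leA x := by
        by_contra hm
        exact hx ((nonMaxR_iff hpoA hpfA).mpr hm)
      constructor
      · intro hxy
        rw [hxmax y hxy]
        exact hpoB.refl _
      · intro hxy
        have h1 : e y = e x := ((heM x hx).1) (e y) hxy
        rw [heInj h1]
        exact hpoA.refl _
  exact ⟨Equiv.ofBijective e ⟨heInj, heSurj⟩, heOrd⟩
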